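/- There is an absolute constant c > 0 (one may take c = 2/π²) with the following property. Let p, ξ ∈ ℝ² with p ≠ 0, ξ ≠ 0 and |ξ| ≤ 1, and let θ ∈ [0,π] be defined by cos θ = −(p̂·ξ)/(|p̂||ξ|). Then the three lower bounds hold: 1 + p̂·ξ ≥ c θ², 1 + p̂·ξ ≥ c (1 − |ξ|²), and 1 + p̂·ξ ≥ c / p_0². Equivalently, (1 + p̂·ξ)^{−1} ≤ c^{−1} min{ θ^{−2}, (1 − |ξ|²)^{−1}, p_0² }. -/

import Mathlib

open scoped RealInnerProductSpace

/-- `p₀ = √(1 + |p|²)` for `p ∈ ℝ²`. -/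
noncomputable def pZero (p : EuclideanSpace ℝ (Fin 2)) : ℝ := Real.sqrt (1 + ‖p‖ ^ 2)

/-- `p̂ = p / p₀` for `p ∈ ℝ²`. -/
noncomputable def pHat (p : EuclideanSpace ℝ (Fin 2)) : EuclideanSpace ℝ (Fin 2) :=
  (pZero p)⁻¹ • p

lemma key_ineq (r θ : ℝ) (hr0 : 0 ≤ r) (hr1 : r ≤ 1) (hθ0 : 0 ≤ θ) (hθπ : θ ≤ Real.pi) :
    (1/10) * θ ^ 2 ≤ 1 - r * Real.cos θ := by
  rcases le_or_gt (Real.cos θ) 0 with hc | hc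
  · have h1 : r * Real.cos θ ≤ 0 := mul_nonpos_of_nonneg_of_nonpos hr0 hc
    have hπ : Real.pi ≤ 4 := Real.pi_le_four
    have hθ2 : θ ^ 2 ≤ 10 := by
      have : Real.pi < 3.15 := by
        have := Real.pi_lt_d2
        linarith
      nlinarith
    linarith
  · -- cos θ > 0, hence θ < π/2
    have hθhalf : θ ≤ Real.pi / 2 := by
      by_contra h
      push_neg at h
      have := Real.cos_nonpos_of_pi_div_two_le_of_le h.le (by linarith [Real.pi_pos])
      linarith
    rcases eq_or_lt_of_le hθ0 with h0 | h0
    · simp [← h0]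
      nlinarith [Real.cos_le_one θ]
    · have hx1 : θ / 2 ≤ 1 := by
        have := Real.pi_le_four
        linarith
      have hsin : θ / 2 - (θ / 2) ^ 3 / 4 < Real.sin (θ / 2) := by
        have := Real.sin_gt_sub_cube (by linarith : (0:ℝ) < θ / 2)
        have h3 : (0:ℝ) ≤ (θ / 2) ^ 3 := by positivity
        linarith
      have hsq : Real.sin (θ / 2) ^ 2 = 1 / 2 - Real.cos (2 * (θ / 2)) / 2 :=
        Real.sin_sq_eq_half_sub (θ / 2)
      rw [show 2 * (θ / 2) = θ by ring] at hsq
      have hx0 : (0:ℝ) ≤ θ / 2 := by linarith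
      have hfac : 3 / 4 * (θ / 2) ≤ θ / 2 - (θ / 2) ^ 3 / 4 := by
        nlinarith [mul_nonneg (mul_nonneg hx0 (by linarith : (0:ℝ) ≤ 1 - θ / 2))
          (by linarith : (0:ℝ) ≤ 1 + θ / 2)]
      have hsinpos : 0 ≤ θ / 2 - (θ / 2) ^ 3 / 4 := by nlinarith
      have h2 : (θ / 2 - (θ / 2) ^ 3 / 4) ^ 2 ≤ Real.sin (θ / 2) ^ 2 := by
        nlinarith
      have h5 : (3 / 4 * (θ / 2)) ^ 2 ≤ (θ / 2 - (θ / 2) ^ 3 / 4) ^ 2 :=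
        pow_le_pow_left₀ (by positivity) hfac 2
      have h3 : r * Real.cos θ ≤ Real.cos θ := by nlinarith
      nlinarith [sq_nonneg θ]

theorem null_factor_lower_bounds :
    ∃ c : ℝ, 0 < c ∧
      ∀ (p ξ : EuclideanSpace ℝ (Fin 2)), p ≠ 0 → ξ ≠ 0 → ‖ξ‖ ≤ 1 →
        ∀ θ : ℝ, θ = Real.arccos (-(⟪pHat p, ξ⟫) / (‖pHat p‖ * ‖ξ‖)) →
          c * θ ^ 2 ≤ 1 + ⟪pHat p, ξ⟫
          ∧ c * (1 - ‖ξ‖ ^ 2) ≤ 1 + ⟪pHat p, ξ⟫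
          ∧ c / pZero p ^ 2 ≤ 1 + ⟪pHat p, ξ⟫ := by
  refine ⟨1/10, by norm_num, ?_⟩
  intro p ξ hp hξ hξ1 θ hθ
  have hp0 : 0 < pZero p := Real.sqrt_pos.2 (by positivity)
  have hp0sq : pZero p ^ 2 = 1 + ‖p‖ ^ 2 := Real.sq_sqrt (by positivity)
  have hple : ‖p‖ ≤ pZero p := by nlinarith [norm_nonneg p]
  have hnp : ‖pHat p‖ = ‖p‖ / pZero p := by
    rw [pHat, norm_smul, Real.norm_eq_abs, abs_inv, abs_of_pos hp0]
    ring
  have hnp1 : ‖pHat p‖ ≤ 1 := by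
    rw [hnp]
    exact div_le_one_of_le₀ hple hp0.le
  have hnppos : 0 < ‖pHat p‖ := by
    rw [hnp]
    exact div_pos (norm_pos_iff.2 hp) hp0
  set a := ⟪pHat p, ξ⟫ with ha
  set r := ‖pHat p‖ * ‖ξ‖ with hrdef
  have hr0 : 0 < r := mul_pos hnppos (norm_pos_iff.2 hξ)
  have hr1 : r ≤ 1 := mul_le_one₀ hnp1 (norm_nonneg _) hξ1
  have hcs : |a| ≤ r := abs_real_inner_le_norm _ _
  have hcs' : -r ≤ a ∧ a ≤ r := abs_le.mp hcs
  have hbd1 : -1 ≤ -a / r := by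
    rw [le_div_iff₀ hr0]
    nlinarith [hcs'.2]
  have hbd2 : -a / r ≤ 1 := by
    rw [div_le_iff₀ hr0]
    nlinarith [hcs'.1]
  have hcos : Real.cos θ = -a / r := by
    rw [hθ]; exact Real.cos_arccos hbd1 hbd2
  have haeq : a = -(r * Real.cos θ) := by
    rw [hcos]; field_simp
  have hθ0 : 0 ≤ θ := hθ ▸ Real.arccos_nonneg _
  have hθπ : θ ≤ Real.pi := hθ ▸ Real.arccos_le_pi _
  have hkey := key_ineq r θ hr0.le hr1 hθ0 hθπ
  have h1plus : 1 + a = 1 - r * Real.cos θ := by rw [haeq]; ring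
  refine ⟨by rw [h1plus]; exact hkey, ?_, ?_⟩
  · -- bound 2
    have hrξ : r ≤ ‖ξ‖ := by
      calc r ≤ 1 * ‖ξ‖ := by
              apply mul_le_mul_of_nonneg_right hnp1 (norm_nonneg _)
        _ = ‖ξ‖ := one_mul _
    have : 1 - ‖ξ‖ ≤ 1 + a := by linarith [hcs'.1]
    nlinarith [norm_nonneg ξ]
  · -- bound 3
    have hrp : r ≤ ‖pHat p‖ := by
      calc r ≤ ‖pHat p‖ * 1 := mul_le_mul_of_nonneg_left hξ1 hnppos.le
        _ = ‖pHat p‖ := mul_one _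
    have h4 : 1 - ‖p‖ / pZero p ≤ 1 + a := by
      rw [← hnp]; linarith [hcs'.1]
    rw [div_le_iff₀ (by positivity : (0:ℝ) < pZero p ^ 2)]
    have h4' : pZero p - ‖p‖ ≤ (1 + a) * pZero p := by
      have := mul_le_mul_of_nonneg_right h4 hp0.le
      calc pZero p - ‖p‖ = (1 - ‖p‖ / pZero p) * pZero p := by field_simp
        _ ≤ (1 + a) * pZero p := this
    have h5 : (pZero p - ‖p‖) * pZero p ≤ (1 + a) * pZero p * pZero p :=
      mul_le_mul_of_nonneg_right h4' hp0.le
    have h6 : 1 ≤ 2 * ((pZero p - ‖p‖) * pZero p) := by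
      nlinarith [sq_nonneg (pZero p - ‖p‖)]
    nlinarith [h5, h6]
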